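/- Fix d ≥ 1, p ∈ (1,∞), α > 0, ε ≥ 0, N ∈ ℕ and a probability measure μ on ℝ^d. Define, for y₁, …, y_N ∈ ℝ^d, f_N(y₁,…,y_N) = (∫₀¹ ∫_{ℝ^d} t^{αp/2 − 1} |(1/N) Σ_{i=1}^N Φ_{t+ε}(x − y_i) − (μ * Φ_{t+ε})(x)|^p dx dt)^{1/p}. Then f_N satisfies the bounded differences property: for every i ∈ {1,…,N} and every y₁,…,y_N, y_i' ∈ ℝ^d, |f_N(y₁,…,y_N) − f_N(y₁,…,y_{i−1}, y_i', y_{i+1},…,y_N)| ≤ (2/N) ‖Φ_ε‖_{𝒲^{−α,p}}. -/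

import Mathlib

open MeasureTheory ProbabilityTheory Real Filter
open scoped ENNReal Topology Classical

noncomputable section

abbrev Esp (d : ℕ) := EuclideanSpace ℝ (Fin d)

/-- The heat kernel on `ℝ^d`. -/
def heatK (d : ℕ) (t : ℝ) (x : Esp d) : ℝ :=
  (4 * π * t) ^ (-(d : ℝ) / 2) * Real.exp (-‖x‖ ^ 2 / (4 * t))

/-- The `𝒲^{-α,p}` norm, applied to the heat evolution `u t = distribution * Φ_t`. -/
def calWNorm (d : ℕ) (α p : ℝ) (u : ℝ → Esp d → ℝ) : ℝ≥0∞ :=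
  (∫⁻ t in Set.Ioc (0:ℝ) 1, ENNReal.ofReal (t ^ (α * p / 2 - 1)) *
      ∫⁻ x, ENNReal.ofReal (|u t x| ^ p)) ^ (1 / p)

/-- Heat evolution of `Φ_ε` (of `δ₀` when `ε = 0`): `Φ_ε * Φ_t = Φ_{t+ε}`. -/
def phiEvol (d : ℕ) (ε : ℝ) : ℝ → Esp d → ℝ := fun t x => heatK d (t + ε) x

/-- Heat evolution of `μ^ε = μ * Φ_ε` (of `μ` when `ε = 0`). -/
def measEvol (d : ℕ) (μ : Measure (Esp d)) (ε : ℝ) : ℝ → Esp d → ℝ :=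
  fun t x => ∫ y, heatK d (t + ε) (x - y) ∂μ

/-- Heat evolution of `μ_N^ε` (of the empirical measure `μ_N` when `ε = 0`),
for the sample `Y 0, …, Y (N-1)`. -/
def empEvol (d N : ℕ) (Y : Fin N → Esp d) (ε : ℝ) : ℝ → Esp d → ℝ :=
  fun t x => (N : ℝ)⁻¹ * ∑ i, heatK d (t + ε) (x - Y i)

/-- Heat evolution of `μ_N^ε - μ^ε`. -/
def empDiff (d N : ℕ) (μ : Measure (Esp d)) (Y : Fin N → Esp d) (ε : ℝ) : ℝ → Esp d → ℝ :=
  fun t x => empEvol d N Y ε t x - measEvol d μ ε t x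

/- ### Auxiliary lemmas -/

lemma measurable_heatK (d : ℕ) : Measurable fun q : ℝ × Esp d => heatK d q.1 q.2 := by
  unfold heatK; fun_prop

lemma measurable_heatK_shift (d : ℕ) (ε : ℝ) (a : Esp d) :
    Measurable fun q : ℝ × Esp d => heatK d (q.1 + ε) (q.2 - a) := by
  have m : Measurable fun q : ℝ × Esp d => ((q.1 + ε, q.2 - a) : ℝ × Esp d) := by fun_prop
  exact (measurable_heatK d).comp m

lemma measurable_empEvol (d N : ℕ) (Y : Fin N → Esp d) (ε : ℝ) :
    Measurable fun q : ℝ × Esp d => empEvol d N Y ε q.1 q.2 := by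
  unfold empEvol
  exact measurable_const.mul
    (Finset.measurable_sum Finset.univ fun j _ => measurable_heatK_shift d ε (Y j))

lemma measurable_measEvol (d : ℕ) (μ : Measure (Esp d)) [IsProbabilityMeasure μ] (ε : ℝ) :
    Measurable fun q : ℝ × Esp d => measEvol d μ ε q.1 q.2 := by
  have m : Measurable fun q : (ℝ × Esp d) × Esp d => ((q.1.1 + ε, q.1.2 - q.2) : ℝ × Esp d) := by
    fun_prop
  have h : StronglyMeasurable fun q : (ℝ × Esp d) × Esp d =>
      heatK d (q.1.1 + ε) (q.1.2 - q.2) :=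
    ((measurable_heatK d).comp m).stronglyMeasurable
  exact h.integral_prod_right'.measurable

/-- The product measure against which `calWNorm` is an `L^p` norm. -/
def nuW (d : ℕ) (α p : ℝ) : Measure (ℝ × Esp d) :=
  ((volume.restrict (Set.Ioc (0:ℝ) 1)).withDensity
    (fun t => ENNReal.ofReal (t ^ (α * p / 2 - 1)))).prod volume

lemma calWNorm_eq (d : ℕ) (α p : ℝ) (hp : 1 < p) (u : ℝ → Esp d → ℝ)
    (hu : Measurable (fun q : ℝ × Esp d => u q.1 q.2)) :
    calWNorm d α p u
      = eLpNorm (fun q : ℝ × Esp d => u q.1 q.2) (ENNReal.ofReal p) (nuW d α p) := by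
  have hp0 : (0:ℝ) < p := lt_trans one_pos hp
  rw [eLpNorm_eq_lintegral_rpow_enorm_toReal (by simp [hp0]) ENNReal.ofReal_ne_top]
  rw [ENNReal.toReal_ofReal hp0.le]
  have hm : Measurable fun q : ℝ × Esp d => ‖u q.1 q.2‖ₑ ^ p :=
    hu.enorm.pow_const p
  rw [nuW, lintegral_prod _ hm.aemeasurable]
  rw [lintegral_withDensity_eq_lintegral_mul _ (by fun_prop) hm.lintegral_prod_right']
  unfold calWNorm
  congr 1
  apply lintegral_congr
  intro t
  simp only [Pi.mul_apply]
  congr 1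
  apply lintegral_congr
  intro x
  rw [← ENNReal.ofReal_rpow_of_nonneg (abs_nonneg _) hp0.le]
  congr 1
  simp [Real.enorm_eq_ofReal_abs]

lemma calW_add_le (d : ℕ) (α p : ℝ) (hp : 1 < p) (u v : ℝ → Esp d → ℝ)
    (hu : Measurable (fun q : ℝ × Esp d => u q.1 q.2))
    (hv : Measurable (fun q : ℝ × Esp d => v q.1 q.2)) :
    calWNorm d α p (fun t x => u t x + v t x)
      ≤ calWNorm d α p u + calWNorm d α p v := by
  rw [calWNorm_eq d α p hp _ (hu.add hv), calWNorm_eq d α p hp _ hu, calWNorm_eq d α p hp _ hv]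
  exact eLpNorm_add_le hu.aestronglyMeasurable hv.aestronglyMeasurable
    (ENNReal.one_le_ofReal.mpr hp.le)

lemma calW_scale (d : ℕ) (α p : ℝ) (hp : 1 < p) (ε c : ℝ) (a : Esp d) :
    calWNorm d α p (fun t x => c * heatK d (t + ε) (x - a))
      = ENNReal.ofReal |c| * calWNorm d α p (phiEvol d ε) := by
  have hp0 : (0:ℝ) < p := lt_trans one_pos hp
  unfold calWNorm phiEvol
  have inner : ∀ t : ℝ, (∫⁻ x, ENNReal.ofReal (|c * heatK d (t + ε) (x - a)| ^ p))
      = ENNReal.ofReal (|c| ^ p) * ∫⁻ x, ENNReal.ofReal (|heatK d (t + ε) x| ^ p) := by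
    intro t
    have h1 : ∀ x : Esp d, ENNReal.ofReal (|c * heatK d (t + ε) (x - a)| ^ p)
        = ENNReal.ofReal (|c| ^ p) * ENNReal.ofReal (|heatK d (t + ε) (x - a)| ^ p) := by
      intro x
      rw [abs_mul, Real.mul_rpow (abs_nonneg _) (abs_nonneg _),
        ENNReal.ofReal_mul (by positivity)]
    simp_rw [h1]
    rw [lintegral_const_mul' _ _ ENNReal.ofReal_ne_top]
    congr 1
    exact lintegral_sub_right_eq_self (fun x => ENNReal.ofReal (|heatK d (t + ε) x| ^ p)) a
  simp_rw [inner, ← mul_assoc, mul_comm _ (ENNReal.ofReal (|c| ^ p)), mul_assoc]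
  rw [lintegral_const_mul' _ _ ENNReal.ofReal_ne_top,
    ENNReal.mul_rpow_of_nonneg _ _ (by positivity : (0:ℝ) ≤ 1 / p),
    ENNReal.ofReal_rpow_of_nonneg (by positivity) (by positivity),
    ← Real.rpow_mul (abs_nonneg c), mul_one_div, div_self hp0.ne', Real.rpow_one]

/-- The one-sided key inequality. -/
lemma calW_update_le (d : ℕ) (p α ε : ℝ) (hp : 1 < p)
    (N : ℕ) (hN : 0 < N)
    (μ : Measure (Esp d)) [IsProbabilityMeasure μ]
    (Y : Fin N → Esp d) (i : Fin N) (z : Esp d) :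
    calWNorm d α p (empDiff d N μ (Function.update Y i z) ε) ≤
        calWNorm d α p (empDiff d N μ Y ε) +
          ENNReal.ofReal (2 / N) * calWNorm d α p (phiEvol d ε) := by
  set g1 : ℝ → Esp d → ℝ := fun t x => (N : ℝ)⁻¹ * heatK d (t + ε) (x - z) with hg1
  set g2 : ℝ → Esp d → ℝ := fun t x => (-(N : ℝ)⁻¹) * heatK d (t + ε) (x - Y i) with hg2
  have hdecomp : empDiff d N μ (Function.update Y i z) ε
      = fun t x => (empDiff d N μ Y ε t x + g1 t x) + g2 t x := by
    funext t x
    simp only [empDiff, empEvol, hg1, hg2]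
    have hsum : (∑ j, heatK d (t + ε) (x - Function.update Y i z j))
        = heatK d (t + ε) (x - z) + ∑ j ∈ Finset.univ \ {i}, heatK d (t + ε) (x - Y j) := by
      have : (fun j => heatK d (t + ε) (x - Function.update Y i z j))
          = Function.update (fun j => heatK d (t + ε) (x - Y j)) i
              (heatK d (t + ε) (x - z)) := by
        funext j
        by_cases hj : j = i
        · subst hj; simp
        · simp [Function.update_of_ne hj]
      rw [this, Finset.sum_update_of_mem (Finset.mem_univ i)]
    have hsum2 : (∑ j, heatK d (t + ε) (x - Y j))
        = heatK d (t + ε) (x - Y i) + ∑ j ∈ Finset.univ \ {i}, heatK d (t + ε) (x - Y j) :=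
      Finset.sum_eq_add_sum_sdiff_singleton_of_mem (Finset.mem_univ i) _
    rw [hsum]
    rw [hsum2]
    ring
  have hC : ENNReal.ofReal (2 / N) * calWNorm d α p (phiEvol d ε)
      = ENNReal.ofReal |(N:ℝ)⁻¹| * calWNorm d α p (phiEvol d ε)
        + ENNReal.ofReal |(-(N:ℝ)⁻¹)| * calWNorm d α p (phiEvol d ε) := by
    rw [← add_mul, ← ENNReal.ofReal_add (abs_nonneg _) (abs_nonneg _)]
    congr 2
    rw [abs_neg, abs_of_nonneg (by positivity : (0:ℝ) ≤ (N:ℝ)⁻¹)]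
    rw [div_eq_mul_inv, two_mul]
  have hmY := (measurable_empEvol d N Y ε).sub (measurable_measEvol d μ ε)
  have hmg1 : Measurable fun q : ℝ × Esp d => g1 q.1 q.2 :=
    measurable_const.mul (measurable_heatK_shift d ε z)
  have hmg2 : Measurable fun q : ℝ × Esp d => g2 q.1 q.2 :=
    measurable_const.mul (measurable_heatK_shift d ε (Y i))
  calc calWNorm d α p (empDiff d N μ (Function.update Y i z) ε)
      = calWNorm d α p (fun t x => (empDiff d N μ Y ε t x + g1 t x) + g2 t x) := by
        rw [hdecomp]
    _ ≤ calWNorm d α p (fun t x => empDiff d N μ Y ε t x + g1 t x)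
          + calWNorm d α p g2 :=
        calW_add_le d α p hp _ _ (hmY.add hmg1) hmg2
    _ ≤ (calWNorm d α p (empDiff d N μ Y ε) + calWNorm d α p g1)
          + calWNorm d α p g2 :=
        add_le_add_left (calW_add_le d α p hp _ _ hmY hmg1) _
    _ = calWNorm d α p (empDiff d N μ Y ε) +
          ENNReal.ofReal (2 / N) * calWNorm d α p (phiEvol d ε) := by
        rw [hC, hg1, hg2, calW_scale d α p hp ε _ z, calW_scale d α p hp ε _ (Y i), add_assoc]

/-- The bounded differences property of
`f_N(y₁,…,y_N) = ‖μ_N^ε - μ^ε‖_{𝒲^{-α,p}}` (stated as the two one-sided inequalities,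
which together express `|f_N(y) - f_N(y')| ≤ (2/N)‖Φ_ε‖_{𝒲^{-α,p}}`). -/
theorem bounded_differences_calW
    (d : ℕ) (hd : 1 ≤ d) (p α ε : ℝ) (hp : 1 < p) (hα : 0 < α) (hε : 0 ≤ ε)
    (N : ℕ) (hN : 0 < N)
    (μ : Measure (Esp d)) [IsProbabilityMeasure μ]
    (Y : Fin N → Esp d) (i : Fin N) (z : Esp d) :
    calWNorm d α p (empDiff d N μ (Function.update Y i z) ε) ≤
        calWNorm d α p (empDiff d N μ Y ε) +
          ENNReal.ofReal (2 / N) * calWNorm d α p (phiEvol d ε) ∧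
    calWNorm d α p (empDiff d N μ Y ε) ≤
        calWNorm d α p (empDiff d N μ (Function.update Y i z) ε) +
          ENNReal.ofReal (2 / N) * calWNorm d α p (phiEvol d ε) := by
  constructor
  · exact calW_update_le d p α ε hp N hN μ Y i z
  · have h := calW_update_le d p α ε hp N hN μ (Function.update Y i z) i (Y i)
    rwa [Function.update_idem, Function.update_eq_self] at h

end
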